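/- Let λ > 0 and f : ℝ → ℝ, let i < j be integers and M ∈ ℕ, and let u : ℤ × ℕ → ℝ (written u_l^n) satisfy the upwind relation u_l^{n+1} = u_l^n − λ(f(u_l^n) − f(u_{l−1}^n)) for all columns l with i + 1 ≤ l ≤ j and all 0 ≤ n ≤ M. Suppose K ≥ 0 is such that the temporal variation of each of these columns is bounded: ∑_{n=0}^{M} |u_l^{n+1} − u_l^n| ≤ K for every l with i + 1 ≤ l ≤ j. Then the flux of the numerical solution is discretely Lipschitz in space in the ℓ¹-in-time sense: ∑_{n=0}^{M} |f(u_j^n) − f(u_i^n)| ≤ (j − i)·K/λ. -/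

import Mathlib

/-- discrete spatial Lipschitz continuity (in the ℓ¹-in-time
sense) of the flux of the numerical solution of the upwind scheme, given
per-column temporal variation bounds. -/
theorem upwind_flux_lipschitz_in_space
    (lam : ℝ) (hlam : 0 < lam) (f : ℝ → ℝ)
    (i j : ℤ) (hij : i < j) (M : ℕ) (u : ℤ × ℕ → ℝ)
    (hscheme : ∀ l : ℤ, i + 1 ≤ l → l ≤ j → ∀ n : ℕ, n ≤ M →
      u (l, n + 1) = u (l, n) - lam * (f (u (l, n)) - f (u (l - 1, n))))
    (K : ℝ) (hK : 0 ≤ K)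
    (hTV : ∀ l : ℤ, i + 1 ≤ l → l ≤ j →
      ∑ n ∈ Finset.range (M + 1), |u (l, n + 1) - u (l, n)| ≤ K) :
    ∑ n ∈ Finset.range (M + 1), |f (u (j, n)) - f (u (i, n))| ≤
      ((j - i : ℤ) : ℝ) * K / lam := by
  -- per-column bound
  have col : ∀ l : ℤ, i + 1 ≤ l → l ≤ j →
      ∑ n ∈ Finset.range (M + 1), |f (u (l, n)) - f (u (l - 1, n))| ≤ K / lam := by
    intro l h1 h2
    have heq : ∀ n ∈ Finset.range (M + 1),
        |f (u (l, n)) - f (u (l - 1, n))| = |u (l, n + 1) - u (l, n)| / lam := by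
      intro n hn
      have hnM : n ≤ M := Nat.lt_succ_iff.mp (Finset.mem_range.mp hn)
      have hs := hscheme l h1 h2 n hnM
      have : u (l, n + 1) - u (l, n) = -(lam * (f (u (l, n)) - f (u (l - 1, n)))) := by
        rw [hs]; ring
      rw [this, abs_neg, abs_mul, abs_of_pos hlam]
      field_simp
    rw [Finset.sum_congr rfl heq, ← Finset.sum_div]
    gcongr
    exact hTV l h1 h2
  -- induction on m from i to j
  have main : ∀ m : ℤ, i ≤ m → m ≤ j →
      ∑ n ∈ Finset.range (M + 1), |f (u (m, n)) - f (u (i, n))| ≤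
        ((m - i : ℤ) : ℝ) * K / lam := by
    intro m hm
    refine Int.le_induction (motive := fun m _ => m ≤ j → ∑ n ∈ Finset.range (M + 1), |f (u (m, n)) - f (u (i, n))| ≤ ((m - i : ℤ) : ℝ) * K / lam) ?_ ?_ m hm
    · intro _
      simp [abs_nonneg, sub_self]
    · intro m hm ih hmj
      have hmj' : m ≤ j := le_trans (by omega) hmj
      have h1 : i + 1 ≤ m + 1 := by omega
      have hc := col (m + 1) h1 hmj
      have ihm := ih hmj'
      calc ∑ n ∈ Finset.range (M + 1), |f (u (m + 1, n)) - f (u (i, n))|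
          ≤ ∑ n ∈ Finset.range (M + 1),
              (|f (u (m + 1, n)) - f (u (m + 1 - 1, n))| + |f (u (m, n)) - f (u (i, n))|) := by
            apply Finset.sum_le_sum
            intro n _
            have : m + 1 - 1 = m := by ring
            rw [this]
            exact (abs_sub_le _ _ _)
        _ = (∑ n ∈ Finset.range (M + 1), |f (u (m + 1, n)) - f (u (m + 1 - 1, n))|)
            + ∑ n ∈ Finset.range (M + 1), |f (u (m, n)) - f (u (i, n))| :=
            Finset.sum_add_distrib
        _ ≤ K / lam + ((m - i : ℤ) : ℝ) * K / lam := add_le_add hc ihm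
        _ = ((m + 1 - i : ℤ) : ℝ) * K / lam := by push_cast; field_simp; ring
  exact main j (le_of_lt hij) le_rfl
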